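/- Under the same setting as the triplet metric loss with bounded inputs ($\|x\| \le B$), the loss $\ell(w; x^+, \tilde x^+, x^-) = \phi(h_w(x^+, \tilde x^+) - h_w(x^+, x^-) + \zeta)$ with $\phi(u) = \log(1+e^{-u})$ is $64B^4$-smooth in $w$: $\|\nabla_w \ell(w) - \nabla_w \ell(w')\| \le 64 B^4 \|w - w'\|$ for all $w, w'$, where gradients and norms are with respect to the Frobenius structure on the matrix parameter space. -/

import Mathlib

open scoped RealInnerProductSpace

/-- The outer product `(x - x')(x - x')ᵀ` viewed as an element of the Euclidean
(Frobenius) space `ℝ^{d×d}`. -/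
noncomputable def outerDiff {d : ℕ} (x x' : EuclideanSpace ℝ (Fin d)) :
    EuclideanSpace ℝ (Fin d × Fin d) :=
  (WithLp.equiv 2 _).symm fun p => (x p.1 - x' p.1) * (x p.2 - x' p.2)

/-- The bilinear model `h_w(x,x') = ⟪w, (x-x')(x-x')ᵀ⟫`. -/
noncomputable def hModel {d : ℕ} (w : EuclideanSpace ℝ (Fin d × Fin d))
    (x x' : EuclideanSpace ℝ (Fin d)) : ℝ :=
  ⟪w, outerDiff x x'⟫

lemma logistic_hasDerivAt (u : ℝ) :
    HasDerivAt (fun u => Real.log (1 + Real.exp (-u))) (-(1 + Real.exp u)⁻¹) u := by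
  have hpos : 0 < 1 + Real.exp (-u) := by positivity
  have h1 : HasDerivAt (fun u : ℝ => 1 + Real.exp (-u)) (Real.exp (-u) * (-1)) u :=
    ((Real.hasDerivAt_exp (-u)).comp u (hasDerivAt_neg u)).const_add 1
  have := h1.log (ne_of_gt hpos)
  convert this using 1
  have he : Real.exp u > 0 := Real.exp_pos u
  rw [Real.exp_neg]
  field_simp
  ring

lemma logistic_deriv_lipschitz :
    LipschitzWith 1 (fun u : ℝ => -(1 + Real.exp u)⁻¹) := by
  have hd : ∀ u : ℝ, HasDerivAt (fun u : ℝ => -(1 + Real.exp u)⁻¹)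
      (Real.exp u / (1 + Real.exp u) ^ 2) u := by
    intro u
    have hpos : (1 + Real.exp u) ≠ 0 := by positivity
    have h1 : HasDerivAt (fun u : ℝ => 1 + Real.exp u) (Real.exp u) u :=
      (Real.hasDerivAt_exp u).const_add 1
    have := (h1.inv hpos).neg
    convert this using 1
    case e'_4 => rfl
    case e'_5 => rfl
    case e'_8 => rfl
    case e'_9 => ring
  apply lipschitzWith_of_nnnorm_deriv_le (fun u => (hd u).differentiableAt)
  intro u
  rw [(hd u).deriv]
  have he : (0:ℝ) < Real.exp u := Real.exp_pos u
  have hle : Real.exp u / (1 + Real.exp u) ^ 2 ≤ 1 := by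
    rw [div_le_one (by positivity)]
    nlinarith
  simpa [← NNReal.coe_le_coe, Real.nnnorm_of_nonneg (by positivity : (0:ℝ) ≤ _)] using
    (by rw [Real.norm_of_nonneg (by positivity)]; exact hle :
      ‖Real.exp u / (1 + Real.exp u) ^ 2‖ ≤ 1)

lemma norm_outerDiff {d : ℕ} (x x' : EuclideanSpace ℝ (Fin d)) :
    ‖outerDiff x x'‖ = ‖x - x'‖ ^ 2 := by
  have key : (∑ i : Fin d, (x i - x' i) ^ 2) = ‖x - x'‖ ^ 2 := by
    rw [EuclideanSpace.norm_eq, Real.sq_sqrt (by positivity)]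
    congr 1; ext i; simp [sq_abs]
  rw [EuclideanSpace.norm_eq]
  have : ∑ p : Fin d × Fin d, ‖outerDiff x x' p‖ ^ 2
      = (∑ i : Fin d, (x i - x' i) ^ 2) * (∑ j : Fin d, (x j - x' j) ^ 2) := by
    rw [Finset.sum_mul_sum, Fintype.sum_prod_type]
    congr 1; ext i; congr 1; ext j
    simp [outerDiff, mul_pow, sq_abs]
  rw [this, key, ← sq, Real.sqrt_sq (by positivity)]

/-- The logistic triplet metric loss is `64B⁴`-smooth in the matrix parameter:
its gradient `φ'(h_w(x⁺,x̃⁺) - h_w(x⁺,x⁻) + ζ) • ((x⁺-x̃⁺)(x⁺-x̃⁺)ᵀ - (x⁺-x⁻)(x⁺-x⁻)ᵀ)`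
is `64B⁴`-Lipschitz. -/
theorem triplet_metric_loss_smooth {d : ℕ} (X : Set (EuclideanSpace ℝ (Fin d)))
    (B : ℝ) (hB : ∀ x ∈ X, ‖x‖ ≤ B) (ζ : ℝ)
    (φ : ℝ → ℝ) (hφ : ∀ u, φ u = Real.log (1 + Real.exp (-u))) :
    ∀ w w' : EuclideanSpace ℝ (Fin d × Fin d),
      ∀ xp ∈ X, ∀ xq ∈ X, ∀ xm ∈ X,
        ‖(deriv φ (hModel w xp xq - hModel w xp xm + ζ)) •
            (outerDiff xp xq - outerDiff xp xm) -
          (deriv φ (hModel w' xp xq - hModel w' xp xm + ζ)) •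
            (outerDiff xp xq - outerDiff xp xm)‖ ≤ 64 * B ^ 4 * ‖w - w'‖ := by
  intro w w' xp hxp xq hxq xm hxm
  set D := outerDiff xp xq - outerDiff xp xm with hD
  have hB0 : 0 ≤ B := le_trans (norm_nonneg xp) (hB xp hxp)
  have hφd : deriv φ = fun u => -(1 + Real.exp u)⁻¹ := by
    have hfun : φ = fun u => Real.log (1 + Real.exp (-u)) := funext hφ
    funext u
    rw [hfun, (logistic_hasDerivAt u).deriv]
  set a := hModel w xp xq - hModel w xp xm + ζ with ha
  set b := hModel w' xp xq - hModel w' xp xm + ζ with hb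
  rw [← sub_smul, norm_smul]
  have hlip : |deriv φ a - deriv φ b| ≤ |a - b| := by
    rw [hφd]
    have h := logistic_deriv_lipschitz.dist_le_mul a b
    rw [Real.dist_eq, Real.dist_eq, NNReal.coe_one, one_mul] at h
    exact h
  have hab : a - b = ⟪w - w', D⟫ := by
    simp only [ha, hb, hModel, hD, inner_sub_left, inner_sub_right]
    ring
  have hinner : |a - b| ≤ ‖w - w'‖ * ‖D‖ := by
    rw [hab]
    exact abs_real_inner_le_norm _ _
  have hq : ‖xp - xq‖ ≤ 2 * B := by
    calc ‖xp - xq‖ ≤ ‖xp‖ + ‖xq‖ := norm_sub_le _ _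
    _ ≤ 2 * B := by linarith [hB xp hxp, hB xq hxq]
  have hm : ‖xp - xm‖ ≤ 2 * B := by
    calc ‖xp - xm‖ ≤ ‖xp‖ + ‖xm‖ := norm_sub_le _ _
    _ ≤ 2 * B := by linarith [hB xp hxp, hB xm hxm]
  have hDle : ‖D‖ ≤ 8 * B ^ 2 := by
    calc ‖D‖ ≤ ‖outerDiff xp xq‖ + ‖outerDiff xp xm‖ := norm_sub_le _ _
    _ = ‖xp - xq‖ ^ 2 + ‖xp - xm‖ ^ 2 := by rw [norm_outerDiff, norm_outerDiff]
    _ ≤ (2 * B) ^ 2 + (2 * B) ^ 2 :=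
        add_le_add (pow_le_pow_left₀ (norm_nonneg _) hq 2)
          (pow_le_pow_left₀ (norm_nonneg _) hm 2)
    _ = 8 * B ^ 2 := by ring
  have hD0 : 0 ≤ ‖D‖ := norm_nonneg D
  have hw0 : 0 ≤ ‖w - w'‖ := norm_nonneg _
  calc ‖deriv φ a - deriv φ b‖ * ‖D‖ ≤ (‖w - w'‖ * ‖D‖) * ‖D‖ := by
        rw [Real.norm_eq_abs]
        exact mul_le_mul_of_nonneg_right (le_trans hlip hinner) hD0
  _ ≤ 64 * B ^ 4 * ‖w - w'‖ := by
        nlinarith [mul_le_mul_of_nonneg_left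
          (mul_le_mul hDle hDle hD0 (by positivity : (0:ℝ) ≤ 8 * B ^ 2)) hw0]
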